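/- For every fixed X ∈ ℝ, the quantity a·Y·∫₀^W φ(x)/√(b(X−x)² + Y²) dx − c (which equals ∂C_exp/∂Y (X,Y) for Y > 0) tends to −c as Y → 0⁺. In particular, there exists Y₀ > 0 such that ∂C_exp/∂Y (X,Y) < 0 for all Y ∈ (0,Y₀). -/

import Mathlib

open Real MeasureTheory Filter

lemma arsinh_le_two_sqrt {s : ℝ} (hs : 0 ≤ s) : Real.arsinh s ≤ 2 * Real.sqrt s := by
  have hmono : MonotoneOn (fun t => 2 * Real.sqrt t - Real.arsinh t) (Set.Ici (0:ℝ)) := by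
    apply monotoneOn_of_hasDerivWithinAt_nonneg (convex_Ici 0)
      (f' := fun t => (Real.sqrt t)⁻¹ - (Real.sqrt (1 + t ^ 2))⁻¹)
    · exact ((continuous_const.mul Real.continuous_sqrt).sub Real.continuous_arsinh).continuousOn
    · intro t ht
      rw [interior_Ici] at ht
      have hst : Real.sqrt t ≠ 0 := (Real.sqrt_pos.2 ht).ne'
      have h1 : HasDerivAt (fun t => 2 * Real.sqrt t) ((Real.sqrt t)⁻¹) t := by
        have h := (Real.hasDerivAt_sqrt (ne_of_gt ht)).const_mul 2
        refine h.congr_deriv ?_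
        field_simp
      exact ((h1.sub (Real.hasDerivAt_arsinh t)).hasDerivWithinAt).mono interior_subset
    · intro t ht
      rw [interior_Ici] at ht
      have h2 : 0 < Real.sqrt t := Real.sqrt_pos.2 ht
      have h1 : Real.sqrt t ≤ Real.sqrt (1 + t ^ 2) := by
        apply Real.sqrt_le_sqrt; nlinarith [sq_nonneg (t - 1)]
      have := inv_anti₀ h2 h1
      linarith
  have h0 := hmono (Set.self_mem_Ici) hs hs
  simp only [Real.sqrt_zero, Real.arsinh_zero, mul_zero, sub_zero] at h0
  linarith

lemma hasDeriv_aux {b Y X : ℝ} (hb : 0 < b) (hY : 0 < Y) (x : ℝ) :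
    HasDerivAt (fun x => (Real.sqrt b)⁻¹ * Real.arsinh (Real.sqrt b * (x - X) / Y))
      ((Real.sqrt (b * (X - x) ^ 2 + Y ^ 2))⁻¹) x := by
  have hsb : (0:ℝ) < Real.sqrt b := Real.sqrt_pos.2 hb
  have hb' : Real.sqrt b ^ 2 = b := Real.sq_sqrt hb.le
  have hS : 0 < b * (X - x) ^ 2 + Y ^ 2 := by positivity
  have hsS : 0 < Real.sqrt (b * (X - x) ^ 2 + Y ^ 2) := Real.sqrt_pos.2 hS
  have h1 : HasDerivAt (fun x => Real.sqrt b * (x - X) / Y) (Real.sqrt b / Y) x := by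
    simpa using (((hasDerivAt_id x).sub_const X).const_mul (Real.sqrt b)).div_const Y
  have h2 := ((Real.hasDerivAt_arsinh _).comp x h1).const_mul (Real.sqrt b)⁻¹
  refine h2.congr_deriv ?_
  have e1 : 1 + (Real.sqrt b * (x - X) / Y) ^ 2 = (b * (X - x) ^ 2 + Y ^ 2) / Y ^ 2 := by
    rw [div_pow, mul_pow, hb']
    field_simp
    ring
  rw [e1, Real.sqrt_div (by positivity), Real.sqrt_sq hY.le]
  field_simp

theorem stmt_4
    (W M a b c : ℝ) (φ : ℝ → ℝ)
    (hW : 0 < W) (hM : 0 < M) (hφm : Measurable φ)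
    (hφ0 : ∀ x, 0 ≤ φ x) (hφM : ∀ x, φ x ≤ M)
    (hφs : ∀ x, x ∉ Set.Icc (0:ℝ) W → φ x = 0)
    (hφ1 : (∫ x in (0:ℝ)..W, φ x) = 1)
    (hb : 0 < b) (hc : 0 < c) (hca : c < a)
    (Cexp : ℝ → ℝ → ℝ)
    (hCexp : ∀ X Y : ℝ, Cexp X Y =
      ∫ x in (0:ℝ)..W, (a * Real.sqrt (b * (X - x) ^ 2 + Y ^ 2) - c * Y) * φ x) :
    ∀ X : ℝ,
      Tendsto (fun Y : ℝ =>
          a * Y * (∫ x in (0:ℝ)..W, φ x / Real.sqrt (b * (X - x) ^ 2 + Y ^ 2)) - c)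
        (nhdsWithin 0 (Set.Ioi 0)) (nhds (-c)) ∧
      ∃ Y₀ : ℝ, 0 < Y₀ ∧ ∀ Y : ℝ, 0 < Y → Y < Y₀ →
        a * Y * (∫ x in (0:ℝ)..W, φ x / Real.sqrt (b * (X - x) ^ 2 + Y ^ 2)) - c < 0 := by
  intro X
  have ha : 0 < a := hc.trans hca
  have hsb : (0:ℝ) < Real.sqrt b := Real.sqrt_pos.2 hb
  set S : ℝ := 2 * Real.sqrt (Real.sqrt b * |W - X|) + 2 * Real.sqrt (Real.sqrt b * |X|) with hSdef
  have hS0 : 0 ≤ S := by positivity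
  -- lower bound
  have hlow : ∀ Y : ℝ, 0 < Y →
      0 ≤ a * Y * (∫ x in (0:ℝ)..W, φ x / Real.sqrt (b * (X - x) ^ 2 + Y ^ 2)) := by
    intro Y hY
    have hInn : 0 ≤ ∫ x in (0:ℝ)..W, φ x / Real.sqrt (b * (X - x) ^ 2 + Y ^ 2) :=
      intervalIntegral.integral_nonneg hW.le fun x _ =>
        div_nonneg (hφ0 x) (Real.sqrt_nonneg _)
    positivity
  -- upper bound
  have key : ∀ Y : ℝ, 0 < Y →
      a * Y * (∫ x in (0:ℝ)..W, φ x / Real.sqrt (b * (X - x) ^ 2 + Y ^ 2))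
        ≤ a * M * (Real.sqrt b)⁻¹ * S * Real.sqrt Y := by
    intro Y hY
    have hsY : (0:ℝ) < Real.sqrt Y := Real.sqrt_pos.2 hY
    have hScont : Continuous fun x : ℝ => Real.sqrt (b * (X - x) ^ 2 + Y ^ 2) := by
      fun_prop
    have hpos : ∀ x : ℝ, 0 < Real.sqrt (b * (X - x) ^ 2 + Y ^ 2) := fun x =>
      Real.sqrt_pos.2 (by positivity)
    have hinvcont : Continuous fun x : ℝ => (Real.sqrt (b * (X - x) ^ 2 + Y ^ 2))⁻¹ :=
      hScont.inv₀ fun x => (hpos x).ne'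
    have hintInv : IntervalIntegrable (fun x => (Real.sqrt (b * (X - x) ^ 2 + Y ^ 2))⁻¹)
        volume 0 W := hinvcont.intervalIntegrable 0 W
    have hintMInv : IntervalIntegrable (fun x => M * (Real.sqrt (b * (X - x) ^ 2 + Y ^ 2))⁻¹)
        volume 0 W := (continuous_const.mul hinvcont).intervalIntegrable 0 W
    have hintφ : IntervalIntegrable (fun x => φ x / Real.sqrt (b * (X - x) ^ 2 + Y ^ 2))
        volume 0 W := by
      apply hintMInv.mono_fun
      · exact (hφm.div hScont.measurable).aestronglyMeasurable
      · filter_upwards with x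
        rw [Real.norm_eq_abs, Real.norm_eq_abs,
          abs_of_nonneg (div_nonneg (hφ0 x) (Real.sqrt_nonneg _)),
          abs_of_nonneg (by positivity : (0:ℝ) ≤ M * (Real.sqrt (b * (X - x) ^ 2 + Y ^ 2))⁻¹),
          div_eq_mul_inv]
        exact mul_le_mul_of_nonneg_right (hφM x) (inv_nonneg.2 (Real.sqrt_nonneg _))
    have hmono : (∫ x in (0:ℝ)..W, φ x / Real.sqrt (b * (X - x) ^ 2 + Y ^ 2))
        ≤ ∫ x in (0:ℝ)..W, M * (Real.sqrt (b * (X - x) ^ 2 + Y ^ 2))⁻¹ := by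
      apply intervalIntegral.integral_mono_on hW.le hintφ hintMInv
      intro x _
      rw [div_eq_mul_inv]
      exact mul_le_mul_of_nonneg_right (hφM x) (inv_nonneg.2 (Real.sqrt_nonneg _))
    have hFTC : (∫ x in (0:ℝ)..W, (Real.sqrt (b * (X - x) ^ 2 + Y ^ 2))⁻¹)
        = (Real.sqrt b)⁻¹ * Real.arsinh (Real.sqrt b * (W - X) / Y)
          - (Real.sqrt b)⁻¹ * Real.arsinh (Real.sqrt b * ((0:ℝ) - X) / Y) :=
      intervalIntegral.integral_eq_sub_of_hasDerivAt (fun x _ => hasDeriv_aux hb hY x) hintInv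
    have hb1 : Real.arsinh (Real.sqrt b * (W - X) / Y)
        ≤ 2 * (Real.sqrt (Real.sqrt b * |W - X|) / Real.sqrt Y) := by
      have h1 : Real.arsinh (Real.sqrt b * (W - X) / Y)
          ≤ 2 * Real.sqrt (|Real.sqrt b * (W - X) / Y|) :=
        le_trans (Real.arsinh_le_arsinh.2 (le_abs_self _)) (arsinh_le_two_sqrt (abs_nonneg _))
      have e : Real.sqrt (|Real.sqrt b * (W - X) / Y|)
          = Real.sqrt (Real.sqrt b * |W - X|) / Real.sqrt Y := by
        rw [abs_div, abs_mul, abs_of_nonneg hsb.le, abs_of_pos hY,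
          Real.sqrt_div (by positivity)]
      rw [e] at h1
      linarith
    have hb2 : -Real.arsinh (Real.sqrt b * ((0:ℝ) - X) / Y)
        ≤ 2 * (Real.sqrt (Real.sqrt b * |X|) / Real.sqrt Y) := by
      rw [← Real.arsinh_neg]
      have h1 : Real.arsinh (-(Real.sqrt b * ((0:ℝ) - X) / Y))
          ≤ 2 * Real.sqrt (|-(Real.sqrt b * ((0:ℝ) - X) / Y)|) :=
        le_trans (Real.arsinh_le_arsinh.2 (le_abs_self _)) (arsinh_le_two_sqrt (abs_nonneg _))
      have e : Real.sqrt (|-(Real.sqrt b * ((0:ℝ) - X) / Y)|)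
          = Real.sqrt (Real.sqrt b * |X|) / Real.sqrt Y := by
        rw [abs_neg, abs_div, abs_mul, abs_of_nonneg hsb.le, abs_of_pos hY,
          zero_sub, abs_neg, Real.sqrt_div (by positivity)]
      rw [e] at h1
      linarith
    have harsinh : Real.arsinh (Real.sqrt b * (W - X) / Y)
        - Real.arsinh (Real.sqrt b * ((0:ℝ) - X) / Y) ≤ S / Real.sqrt Y := by
      have hSe : S / Real.sqrt Y = 2 * (Real.sqrt (Real.sqrt b * |W - X|) / Real.sqrt Y)
          + 2 * (Real.sqrt (Real.sqrt b * |X|) / Real.sqrt Y) := by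
        rw [hSdef]; ring
      rw [hSe]
      linarith
    have hIb : (∫ x in (0:ℝ)..W, φ x / Real.sqrt (b * (X - x) ^ 2 + Y ^ 2))
        ≤ M * ((Real.sqrt b)⁻¹ * (S / Real.sqrt Y)) := by
      rw [intervalIntegral.integral_const_mul, hFTC] at hmono
      calc (∫ x in (0:ℝ)..W, φ x / Real.sqrt (b * (X - x) ^ 2 + Y ^ 2))
          ≤ M * ((Real.sqrt b)⁻¹ * Real.arsinh (Real.sqrt b * (W - X) / Y)
            - (Real.sqrt b)⁻¹ * Real.arsinh (Real.sqrt b * ((0:ℝ) - X) / Y)) := hmono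
        _ = M * ((Real.sqrt b)⁻¹ * (Real.arsinh (Real.sqrt b * (W - X) / Y)
            - Real.arsinh (Real.sqrt b * ((0:ℝ) - X) / Y))) := by ring
        _ ≤ M * ((Real.sqrt b)⁻¹ * (S / Real.sqrt Y)) := by gcongr
    calc a * Y * (∫ x in (0:ℝ)..W, φ x / Real.sqrt (b * (X - x) ^ 2 + Y ^ 2))
        ≤ a * Y * (M * ((Real.sqrt b)⁻¹ * (S / Real.sqrt Y))) := by
          apply mul_le_mul_of_nonneg_left hIb (by positivity)
      _ = a * M * (Real.sqrt b)⁻¹ * S * Real.sqrt Y := by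
          rw [eq_comm, ← Real.div_sqrt (x := Y)]
          field_simp
          ring_nf
          rw [Real.sq_sqrt hY.le]
  -- squeeze
  have hsq : Tendsto (fun Y : ℝ => Real.sqrt Y) (nhdsWithin 0 (Set.Ioi 0)) (nhds 0) := by
    have h := Real.continuous_sqrt.tendsto 0
    simpa using h.mono_left nhdsWithin_le_nhds
  have hB : Tendsto (fun Y : ℝ => a * M * (Real.sqrt b)⁻¹ * S * Real.sqrt Y)
      (nhdsWithin 0 (Set.Ioi 0)) (nhds 0) := by
    simpa using hsq.const_mul (a * M * (Real.sqrt b)⁻¹ * S)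
  have hg0 : Tendsto (fun Y : ℝ =>
      a * Y * (∫ x in (0:ℝ)..W, φ x / Real.sqrt (b * (X - x) ^ 2 + Y ^ 2)))
      (nhdsWithin 0 (Set.Ioi 0)) (nhds 0) := by
    apply tendsto_of_tendsto_of_tendsto_of_le_of_le' tendsto_const_nhds hB
    · filter_upwards [self_mem_nhdsWithin] with Y hY using hlow Y hY
    · filter_upwards [self_mem_nhdsWithin] with Y hY using key Y hY
  have hmain : Tendsto (fun Y : ℝ =>
      a * Y * (∫ x in (0:ℝ)..W, φ x / Real.sqrt (b * (X - x) ^ 2 + Y ^ 2)) - c)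
      (nhdsWithin 0 (Set.Ioi 0)) (nhds (-c)) := by
    simpa using hg0.sub_const c
  refine ⟨hmain, ?_⟩
  have hev : ∀ᶠ Y in nhdsWithin 0 (Set.Ioi 0),
      a * Y * (∫ x in (0:ℝ)..W, φ x / Real.sqrt (b * (X - x) ^ 2 + Y ^ 2)) - c < 0 :=
    hmain.eventually_lt_const (by linarith)
  obtain ⟨Y₀, hY₀, hsub⟩ := mem_nhdsGT_iff_exists_Ioo_subset.1 hev
  exact ⟨Y₀, hY₀, fun Y h1 h2 => hsub ⟨h1, h2⟩⟩
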